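/- Consider decentralized gradient descent 𝐱(t+1) = W𝐱(t) - α(t)∇f(𝐱(t)) with W doubly stochastic, β the spectral norm of W - (1/m)𝟙𝟙ᵀ, and each f_i L-smooth. With D = max_i ‖∇f_i(x*)‖ and block norms as above, the consensus error satisfies ‖𝐱(t+1) - 𝐱̄(t+1)‖ ≤ (β + Lα(t))‖𝐱(t) - 𝐱̄(t)‖ + Lα(t)‖𝐱̄(t) - 𝐱*‖ + √m·D·α(t), where 𝐱̄(t) stacks m copies of x̄(t) and 𝐱* stacks m copies of x*. -/

import Mathlib

noncomputable section

namespace DGDAux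

variable {m : ℕ} {E : Type*} [NormedAddCommGroup E] [InnerProductSpace ℝ E]

def stk (m : ℕ) (E : Type*) [NormedAddCommGroup E] [InnerProductSpace ℝ E] :
    (Fin m → E) →ₗ[ℝ] PiLp 2 (fun _ : Fin m => E) :=
  (WithLp.linearEquiv 2 ℝ (Fin m → E)).symm.toLinearMap

lemma norm_stk (v : Fin m → E) :
    ‖stk m E v‖ = Real.sqrt (∑ i, ‖v i‖ ^ 2) := by
  rw [PiLp.norm_eq_of_L2]; rfl

-- monotonicity: if ∑ ‖v i‖² ≤ ∑ ‖w i‖² then ‖stk v‖ ≤ ‖stk w‖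
lemma norm_stk_le_of_sq_le {v w : Fin m → E}
    (h : ∑ i, ‖v i‖ ^ 2 ≤ ∑ i, ‖w i‖ ^ 2) : ‖stk m E v‖ ≤ ‖stk m E w‖ := by
  rw [norm_stk, norm_stk]; exact Real.sqrt_le_sqrt h

-- constant vector
lemma norm_stk_const (c : E) :
    ‖stk m E (fun _ => c)‖ = Real.sqrt m * ‖c‖ := by
  rw [norm_stk]
  simp [Finset.sum_const, Real.sqrt_mul (by positivity : (0:ℝ) ≤ (m:ℝ)),
    Real.sqrt_sq (norm_nonneg c)]

-- mean removal decreases stacked norm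
lemma norm_stk_sub_mean_le (hm : 0 < m) (G : Fin m → E) :
    ‖stk m E (fun i => G i - (m : ℝ)⁻¹ • ∑ j, G j)‖ ≤ ‖stk m E G‖ := by
  set Gbar := (m : ℝ)⁻¹ • ∑ j, G j with hGbar
  apply norm_stk_le_of_sq_le
  have hsum : ∑ j, G j = (m : ℝ) • Gbar := by
    rw [hGbar, smul_smul, mul_inv_cancel₀ (by exact_mod_cast hm.ne'), one_smul]
  have hexp : ∑ i, ‖G i - Gbar‖ ^ 2
      = ∑ i, ‖G i‖ ^ 2 - (m : ℝ) * ‖Gbar‖ ^ 2 := by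
    have : ∀ i, ‖G i - Gbar‖ ^ 2
        = ‖G i‖ ^ 2 - 2 * inner ℝ (G i) Gbar + ‖Gbar‖ ^ 2 :=
      fun i => norm_sub_sq_real (G i) Gbar
    rw [Finset.sum_congr rfl (fun i _ => this i)]
    rw [Finset.sum_add_distrib, Finset.sum_sub_distrib, ← Finset.mul_sum,
      ← sum_inner, hsum, real_inner_smul_left, real_inner_self_eq_norm_sq]
    simp [Finset.sum_const]
    ring
  rw [hexp]
  nlinarith [sq_nonneg ‖Gbar‖, (Nat.cast_pos (α := ℝ)).mpr hm]


lemma euclid_norm_sq {n : ℕ} (y : EuclideanSpace ℝ (Fin n)) :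
    ‖y‖ ^ 2 = ∑ k, (y k) ^ 2 := by
  rw [EuclideanSpace.norm_eq, Real.sq_sqrt (by positivity)]
  simp [sq_abs]

lemma norm_stk_matrix {m d : ℕ} (A : Matrix (Fin m) (Fin m) ℝ) (β : ℝ)
    (hβ : ∀ u : EuclideanSpace ℝ (Fin m), ‖Matrix.toEuclideanLin A u‖ ≤ β * ‖u‖)
    (hβ0 : 0 ≤ β)
    (v : Fin m → EuclideanSpace ℝ (Fin d)) :
    ‖stk m _ (fun i => ∑ j, A i j • v j)‖ ≤ β * ‖stk m _ v‖ := by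
  rw [norm_stk, norm_stk]
  have hscalar : ∀ w : Fin m → ℝ,
      ∑ i, (∑ j, A i j * w j) ^ 2 ≤ β ^ 2 * ∑ j, (w j) ^ 2 := by
    intro w
    have h := hβ ((WithLp.equiv 2 (Fin m → ℝ)).symm w)
    change ‖(WithLp.equiv 2 (Fin m → ℝ)).symm (A.mulVec w)‖ ≤ _ at h
    have h1 : ‖(WithLp.equiv 2 (Fin m → ℝ)).symm (A.mulVec w)‖
        = Real.sqrt (∑ i, (∑ j, A i j * w j) ^ 2) := by
      rw [EuclideanSpace.norm_eq]
      simp [sq_abs, Matrix.mulVec, dotProduct]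
    have h2 : ‖(WithLp.equiv 2 (Fin m → ℝ)).symm w‖
        = Real.sqrt (∑ j, (w j) ^ 2) := by
      rw [EuclideanSpace.norm_eq]
      simp [sq_abs]
    rw [h1, h2] at h
    have h3 := mul_self_le_mul_self (Real.sqrt_nonneg _) h
    rw [Real.mul_self_sqrt (by positivity)] at h3
    calc ∑ i, (∑ j, A i j * w j) ^ 2 ≤ (β * Real.sqrt (∑ j, (w j) ^ 2)) *
          (β * Real.sqrt (∑ j, (w j) ^ 2)) := h3
      _ = β ^ 2 * (Real.sqrt (∑ j, (w j) ^ 2) * Real.sqrt (∑ j, (w j) ^ 2)) := by ring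
      _ = β ^ 2 * ∑ j, (w j) ^ 2 := by rw [Real.mul_self_sqrt (by positivity)]
  have key : ∑ i, ‖∑ j, A i j • v j‖ ^ 2 ≤ β ^ 2 * ∑ j, ‖v j‖ ^ 2 := by
    calc ∑ i, ‖∑ j, A i j • v j‖ ^ 2
        = ∑ i, ∑ k, ((∑ j, A i j • v j) k) ^ 2 := by
          simp_rw [euclid_norm_sq]
      _ = ∑ i, ∑ k, (∑ j, A i j * v j k) ^ 2 := by
          congr 1; ext i; congr 1; ext k; congr 1
          rw [WithLp.ofLp_sum, Finset.sum_apply]; rfl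
      _ = ∑ k, ∑ i, (∑ j, A i j * v j k) ^ 2 := Finset.sum_comm
      _ ≤ ∑ k : Fin d, β ^ 2 * ∑ j, (v j k) ^ 2 :=
          Finset.sum_le_sum fun k _ => hscalar (fun j => v j k)
      _ = β ^ 2 * ∑ j, ∑ k, (v j k) ^ 2 := by
          rw [← Finset.mul_sum, Finset.sum_comm]
      _ = β ^ 2 * ∑ j, ‖v j‖ ^ 2 := by simp_rw [euclid_norm_sq]
  calc Real.sqrt (∑ i, ‖∑ j, A i j • v j‖ ^ 2)
      ≤ Real.sqrt (β ^ 2 * ∑ j, ‖v j‖ ^ 2) := Real.sqrt_le_sqrt key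
    _ = β * Real.sqrt (∑ j, ‖v j‖ ^ 2) := by
        rw [Real.sqrt_mul (by positivity), Real.sqrt_sq hβ0]

end DGDAux


set_option maxHeartbeats 2000000 in
open DGDAux in
theorem dgd_consensus_estimate
    (m d : ℕ) (hm : 0 < m) (L D : ℝ) (hL : 0 < L) (hD : 0 ≤ D)
    (W : Matrix (Fin m) (Fin m) ℝ)
    (hnonneg : ∀ i j, 0 ≤ W i j)
    (hrow : ∀ i, ∑ j, W i j = 1) (hcol : ∀ j, ∑ i, W i j = 1)
    (β : ℝ)
    (hβ : β = ‖LinearMap.toContinuousLinearMap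
      (Matrix.toEuclideanLin (W - Matrix.of (fun _ _ => (m : ℝ)⁻¹)))‖)
    (hβ1 : β < 1)
    (g : Fin m → EuclideanSpace ℝ (Fin d) → EuclideanSpace ℝ (Fin d))
    (hsmooth : ∀ i x y, ‖g i y - g i x‖ ≤ L * ‖y - x‖)
    (xstar : EuclideanSpace ℝ (Fin d))
    (hDbound : ∀ i, ‖g i xstar‖ ≤ D)
    (α : ℕ → ℝ) (hα : ∀ t, 0 < α t)
    (x : ℕ → Fin m → EuclideanSpace ℝ (Fin d))
    (hrec : ∀ t i, x (t + 1) i = (∑ j, W i j • x t j) - α t • g i (x t i))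
    (xbar : ℕ → EuclideanSpace ℝ (Fin d))
    (hxbar : ∀ t, xbar t = (m : ℝ)⁻¹ • ∑ i, x t i) :
    ∀ t, Real.sqrt (∑ i, ‖x (t + 1) i - xbar (t + 1)‖^2) ≤
      (β + L * α t) * Real.sqrt (∑ i, ‖x t i - xbar t‖^2)
        + L * α t * (Real.sqrt m * ‖xbar t - xstar‖)
        + Real.sqrt m * D * α t := by
  intro t
  have hm0 : (m : ℝ) ≠ 0 := Nat.cast_ne_zero.mpr hm.ne'
  set A : Matrix (Fin m) (Fin m) ℝ := W - Matrix.of (fun _ _ => (m : ℝ)⁻¹) with hAdef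
  set G : Fin m → EuclideanSpace ℝ (Fin d) := fun i => g i (x t i) with hGdef
  set Gbar : EuclideanSpace ℝ (Fin d) := (m : ℝ)⁻¹ • ∑ j, G j with hGbardef
  have hβ0 : 0 ≤ β := hβ ▸ norm_nonneg _
  -- operator norm bound
  have hop : ∀ z : EuclideanSpace ℝ (Fin m), ‖Matrix.toEuclideanLin A z‖ ≤ β * ‖z‖ := by
    intro z
    have h := (LinearMap.toContinuousLinearMap (Matrix.toEuclideanLin A)).le_opNorm z
    rw [← hβ] at h
    simpa using h
  -- mean recursion
  have hxbar1 : xbar (t + 1) = xbar t - α t • Gbar := by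
    rw [hxbar]
    simp only [hrec]
    rw [Finset.sum_sub_distrib, smul_sub]
    congr 1
    · rw [Finset.sum_comm]
      simp_rw [← Finset.sum_smul, hcol, one_smul]
      rw [← hxbar]
    · rw [← Finset.smul_sum, hGbardef, smul_comm]
  -- pointwise decomposition
  have hdiff : ∀ i, x (t + 1) i - xbar (t + 1)
      = (∑ j, A i j • (x t j - xbar t)) - α t • (G i - Gbar) := by
    intro i
    have e1 : ∑ j, A i j • (x t j - xbar t) = (∑ j, W i j • x t j) - xbar t := by
      have t1 : ∑ j, W i j • xbar t = xbar t := by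
        rw [← Finset.sum_smul, hrow, one_smul]
      have t2 : ∑ j : Fin m, (m : ℝ)⁻¹ • x t j = xbar t := by
        rw [← Finset.smul_sum, ← hxbar]
      have t3 : ∑ _j : Fin m, (m : ℝ)⁻¹ • xbar t = xbar t := by
        rw [Finset.sum_const, Finset.card_fin, ← Nat.cast_smul_eq_nsmul ℝ,
          smul_smul, mul_inv_cancel₀ hm0, one_smul]
      simp only [hAdef, Matrix.sub_apply, Matrix.of_apply, sub_smul, smul_sub]
      rw [Finset.sum_sub_distrib, Finset.sum_sub_distrib, Finset.sum_sub_distrib,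
        t1, t2, t3]
      abel
    rw [hrec, hxbar1, e1, smul_sub]
    abel
  -- abbreviations for stacked norms
  have e1 : Real.sqrt (∑ i, ‖x (t + 1) i - xbar (t + 1)‖ ^ 2)
      = ‖stk m _ (fun i => x (t + 1) i - xbar (t + 1))‖ := (norm_stk _).symm
  have e2 : Real.sqrt (∑ i, ‖x t i - xbar t‖ ^ 2)
      = ‖stk m _ (fun i => x t i - xbar t)‖ := (norm_stk _).symm
  rw [e1, e2]
  set S := ‖stk m (EuclideanSpace ℝ (Fin d)) (fun i => x t i - xbar t)‖ with hS
  set N := ‖xbar t - xstar‖ with hN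
  -- the contraction bound
  have h1 : ‖stk m _ (fun i => ∑ j, A i j • (x t j - xbar t))‖ ≤ β * S :=
    norm_stk_matrix A β hop hβ0 _
  -- Lipschitz bound
  have hLip : ‖stk m _ (fun i => G i - g i xstar)‖
      ≤ L * ‖stk m _ (fun i => x t i - xstar)‖ := by
    rw [norm_stk, norm_stk]
    have hsq : ∑ i, ‖G i - g i xstar‖ ^ 2 ≤ L ^ 2 * ∑ i, ‖x t i - xstar‖ ^ 2 := by
      rw [Finset.mul_sum]
      apply Finset.sum_le_sum
      intro i _
      have h := hsmooth i xstar (x t i)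
      nlinarith [norm_nonneg (G i - g i xstar), norm_nonneg (x t i - xstar)]
    calc Real.sqrt (∑ i, ‖G i - g i xstar‖ ^ 2)
        ≤ Real.sqrt (L ^ 2 * ∑ i, ‖x t i - xstar‖ ^ 2) := Real.sqrt_le_sqrt hsq
      _ = L * Real.sqrt (∑ i, ‖x t i - xstar‖ ^ 2) := by
          rw [Real.sqrt_mul (by positivity), Real.sqrt_sq hL.le]
  -- distance to xstar split
  have hx2 : ‖stk m _ (fun i => x t i - xstar)‖ ≤ S + Real.sqrt m * N := by
    have hsplit : stk m (EuclideanSpace ℝ (Fin d)) (fun i => x t i - xstar)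
        = stk m _ (fun i => x t i - xbar t) + stk m _ (fun _ => xbar t - xstar) := by
      rw [← map_add]
      congr 1
      funext i
      simp only [Pi.add_apply]
      abel
    rw [hsplit]
    calc ‖stk m (EuclideanSpace ℝ (Fin d)) (fun i => x t i - xbar t)
          + stk m _ (fun _ => xbar t - xstar)‖
        ≤ S + ‖stk m (EuclideanSpace ℝ (Fin d)) (fun _ => xbar t - xstar)‖ :=
          norm_add_le _ _
      _ = S + Real.sqrt m * N := by rw [norm_stk_const]
  -- gradient at xstar bound
  have hDs : ‖stk m (EuclideanSpace ℝ (Fin d)) (fun i => g i xstar)‖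
      ≤ Real.sqrt m * D := by
    rw [norm_stk]
    have hsq : ∑ i : Fin m, ‖g i xstar‖ ^ 2 ≤ (m : ℝ) * D ^ 2 := by
      calc ∑ i : Fin m, ‖g i xstar‖ ^ 2 ≤ ∑ _i : Fin m, D ^ 2 :=
            Finset.sum_le_sum fun i _ =>
              pow_le_pow_left₀ (norm_nonneg _) (hDbound i) 2
        _ = (m : ℝ) * D ^ 2 := by
            rw [Finset.sum_const, Finset.card_fin, nsmul_eq_mul]
    calc Real.sqrt (∑ i, ‖g i xstar‖ ^ 2) ≤ Real.sqrt ((m : ℝ) * D ^ 2) :=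
          Real.sqrt_le_sqrt hsq
      _ = Real.sqrt m * D := by
          rw [Real.sqrt_mul (by positivity), Real.sqrt_sq hD]
  -- full gradient bound
  have hGb : ‖stk m (EuclideanSpace ℝ (Fin d)) G‖
      ≤ L * (S + Real.sqrt m * N) + Real.sqrt m * D := by
    have hsplit : stk m (EuclideanSpace ℝ (Fin d)) G
        = stk m _ (fun i => G i - g i xstar) + stk m _ (fun i => g i xstar) := by
      rw [← map_add]
      congr 1
      funext i
      simp
    calc ‖stk m (EuclideanSpace ℝ (Fin d)) G‖
        ≤ ‖stk m (EuclideanSpace ℝ (Fin d)) (fun i => G i - g i xstar)‖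
          + ‖stk m (EuclideanSpace ℝ (Fin d)) (fun i => g i xstar)‖ := by
          rw [hsplit]; exact norm_add_le _ _
      _ ≤ L * ‖stk m _ (fun i => x t i - xstar)‖ + Real.sqrt m * D := by
          exact add_le_add hLip hDs
      _ ≤ L * (S + Real.sqrt m * N) + Real.sqrt m * D := by
          have := mul_le_mul_of_nonneg_left hx2 hL.le
          linarith
  -- mean-removal bound
  have h2 : ‖stk m (EuclideanSpace ℝ (Fin d)) (fun i => G i - Gbar)‖
      ≤ ‖stk m (EuclideanSpace ℝ (Fin d)) G‖ := norm_stk_sub_mean_le hm G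
  -- put everything together
  have hfun : stk m (EuclideanSpace ℝ (Fin d)) (fun i => x (t + 1) i - xbar (t + 1))
      = stk m _ (fun i => ∑ j, A i j • (x t j - xbar t))
        - α t • stk m _ (fun i => G i - Gbar) := by
    rw [← map_smul, ← map_sub]
    congr 1
    funext i
    simp only [Pi.sub_apply, Pi.smul_apply]
    exact hdiff i
  rw [hfun]
  have hchain : ‖stk m (EuclideanSpace ℝ (Fin d)) (fun i => ∑ j, A i j • (x t j - xbar t))
        - α t • stk m (EuclideanSpace ℝ (Fin d)) (fun i => G i - Gbar)‖
      ≤ β * S + α t * (L * (S + Real.sqrt m * N) + Real.sqrt m * D) := by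
    calc ‖stk m (EuclideanSpace ℝ (Fin d)) (fun i => ∑ j, A i j • (x t j - xbar t))
          - α t • stk m (EuclideanSpace ℝ (Fin d)) (fun i => G i - Gbar)‖
        ≤ ‖stk m (EuclideanSpace ℝ (Fin d)) (fun i => ∑ j, A i j • (x t j - xbar t))‖
          + ‖α t • stk m (EuclideanSpace ℝ (Fin d)) (fun i => G i - Gbar)‖ :=
          norm_sub_le _ _
      _ = ‖stk m (EuclideanSpace ℝ (Fin d)) (fun i => ∑ j, A i j • (x t j - xbar t))‖
          + α t * ‖stk m (EuclideanSpace ℝ (Fin d)) (fun i => G i - Gbar)‖ := by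
          rw [norm_smul, Real.norm_eq_abs, abs_of_pos (hα t)]
      _ ≤ β * S + α t * (L * (S + Real.sqrt m * N) + Real.sqrt m * D) := by
          have h3 := h2.trans hGb
          have h4 := mul_le_mul_of_nonneg_left h3 (hα t).le
          linarith
  refine hchain.trans (le_of_eq ?_)
  ring
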